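/- Cauchy-type Pawlikowska theorem: Let n be a positive integer and let f, g : ℝ → ℝ be n-times differentiable at every point of the closed interval [a,b] (with a < b), with g^{(n)}(a) ≠ g^{(n)}(b). Then there exists a point η ∈ (a,b) such that f(a) - T_n(f,η)(a) = ((f^{(n)}(b) - f^{(n)}(a))/(g^{(n)}(b) - g^{(n)}(a))) · ( g(a) - T_n(g,η)(a) ). -/

import Mathlib

open Set Filter Topology Nat

theorem pawlikowska_aux (h : ℝ → ℝ) (a b : ℝ) (m : ℕ) (hab : a < b)
    (hd : ∀ i < m + 1, ∀ x ∈ Set.Icc a b,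
      DifferentiableWithinAt ℝ (iteratedDerivWithin i h (Set.Icc a b)) (Set.Icc a b) x)
    (ha0 : iteratedDerivWithin (m + 1) h (Set.Icc a b) a = 0)
    (hb0 : iteratedDerivWithin (m + 1) h (Set.Icc a b) b = 0) :
    ∃ η ∈ Set.Ioo a b, h a = taylorWithinEval h (m + 1) (Set.Icc a b) η a := by
  set s := Set.Icc a b with hsdef
  have hs : UniqueDiffOn ℝ s := uniqueDiffOn_Icc hab
  have has : a ∈ s := Set.left_mem_Icc.2 hab.le
  have hbs : b ∈ s := Set.right_mem_Icc.2 hab.le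
  have hC : ContDiffOn ℝ m h s := by
    apply contDiffOn_of_differentiableOn_deriv
    intro i hi
    exact fun x hx => hd i (Nat.lt_succ_of_le (by exact_mod_cast hi)) x hx
  set G : ℝ → ℝ := fun y => taylorWithinEval h m s y a with hGdef
  have hG' : ∀ y ∈ s, HasDerivWithinAt G
      (((m ! : ℝ)⁻¹ * (a - y) ^ m) • iteratedDerivWithin (m + 1) h s y) s y := fun y hy =>
    hasDerivWithinAt_taylorWithinEval hs self_mem_nhdsWithin hy subset_rfl hC
      (hd m (Nat.lt_succ_self m) y hy)
  have hGa : G a = h a := taylorWithinEval_self h m s a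
  have hGc : ContinuousOn G s := fun y hy => (hG' y hy).continuousWithinAt
  -- Cauchy MVT representation
  have key : ∀ x ∈ Set.Ioc a b, ∃ c ∈ Set.Icc a x,
      G x - G a = ((a - x) ^ m / (m ! : ℝ)) *
        (iteratedDerivWithin m h s x - iteratedDerivWithin m h s c) := by
    intro x hx
    have hxs : x ∈ s := ⟨hx.1.le, hx.2⟩
    rcases Nat.eq_zero_or_pos m with hm | hm
    · subst hm
      refine ⟨a, Set.left_mem_Icc.2 hx.1.le, ?_⟩
      simp [hGdef]
    · obtain ⟨k, rfl⟩ := Nat.exists_eq_succ_of_ne_zero hm.ne'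
      set tp : ℝ → ℝ := fun t => taylorWithinEval h k s t a with htpdef
      have hCk : ContDiffOn ℝ k h s := hC.of_le (by exact_mod_cast Nat.le_succ k)
      have htp' : ∀ t ∈ s, HasDerivWithinAt tp
          (((k ! : ℝ)⁻¹ * (a - t) ^ k) • iteratedDerivWithin (k + 1) h s t) s t := fun t ht =>
        hasDerivWithinAt_taylorWithinEval hs self_mem_nhdsWithin ht subset_rfl hCk
          (hd k (by omega) t ht)
      have hsub : Set.Icc a x ⊆ s := Set.Icc_subset_Icc_right hx.2
      have hsub' : Set.Ioo a x ⊆ Set.Ioo a b := Set.Ioo_subset_Ioo_right hx.2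
      have htpc : ContinuousOn tp (Set.Icc a x) := fun t ht =>
        ((htp' t (hsub ht)).continuousWithinAt).mono hsub
      have htpd : ∀ t ∈ Set.Ioo a x, HasDerivAt tp
          (((k ! : ℝ)⁻¹ * (a - t) ^ k) * iteratedDerivWithin (k + 1) h s t) t := by
        intro t ht
        have := (htp' t (hsub (Set.Ioo_subset_Icc_self ht))).hasDerivAt
          (Icc_mem_nhds (hsub' ht).1 (hsub' ht).2)
        simpa [smul_eq_mul] using this
      have hωc : ContinuousOn (fun t => (a - t) ^ (k + 1)) (Set.Icc a x) :=
        ((continuous_const.sub continuous_id).pow (k + 1)).continuousOn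
      have hωd : ∀ t ∈ Set.Ioo a x, HasDerivAt (fun t => (a - t) ^ (k + 1))
          (-(k + 1 : ℝ) * (a - t) ^ k) t := fun t _ => by
        simpa using monomial_has_deriv_aux t a k
      obtain ⟨c, hc, hceq⟩ := exists_ratio_hasDerivAt_eq_ratio_slope tp
        (fun t => ((k ! : ℝ)⁻¹ * (a - t) ^ k) * iteratedDerivWithin (k + 1) h s t) hx.1 htpc htpd
        (fun t => (a - t) ^ (k + 1)) (fun t => -(k + 1 : ℝ) * (a - t) ^ k) hωc hωd
      refine ⟨c, Set.Ioo_subset_Icc_self hc, ?_⟩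
      have hcs : c ∈ s := hsub (Set.Ioo_subset_Icc_self hc)
      have hac : a - c ≠ 0 := by have := hc.1; intro hcon; linarith [sub_eq_zero.1 hcon]
      have hck : ((a - c) ^ k : ℝ) ≠ 0 := pow_ne_zero _ hac
      have htpa : tp a = h a := taylorWithinEval_self h k s a
      set Hx := iteratedDerivWithin (k + 1) h s x
      set Hc := iteratedDerivWithin (k + 1) h s c
      have hGx : G x = tp x + (((k : ℝ) + 1) * (k ! : ℝ))⁻¹ * (a - x) ^ (k + 1) * Hx := by
        have hsx := taylorWithinEval_succ h k s x a
        rw [smul_eq_mul] at hsx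
        show taylorWithinEval h (k + 1) s x a = _
        rw [hsx]
      have hGa2 : G a = tp a := by rw [hGa, htpa]
      have E2 : (a - x) ^ (k + 1) * ((k ! : ℝ)⁻¹ * Hc) = (tp x - tp a) * (-((k : ℝ) + 1)) :=
        mul_right_cancel₀ hck (by linear_combination hceq)
      have hk0 : (k ! : ℝ) ≠ 0 := by exact_mod_cast Nat.factorial_ne_zero k
      have hk1 : ((k : ℝ) + 1) ≠ 0 := by positivity
      have E2' : (a - x) ^ (k + 1) * Hc = (tp a - tp x) * (((k : ℝ) + 1) * (k ! : ℝ)) := by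
        field_simp at E2
        linear_combination E2
      rw [hGx, hGa2, Nat.factorial_succ]
      push_cast
      field_simp
      linear_combination E2'
  -- the auxiliary Flett function
  set J : ℝ → ℝ := fun x => (G x - G a) / (x - a) ^ (m + 1) with hJdef
  have hJa : J a = 0 := by simp [hJdef]
  -- limit of J at a
  set Q := iteratedDerivWithin m h s with hQdef
  have hder_a : HasDerivWithinAt Q 0 s a := by
    have hda := (hd m (Nat.lt_succ_self m) a has).hasDerivWithinAt
    rwa [← iteratedDerivWithin_succ, ha0] at hda
  have hm1 : (1 : ℝ) ≤ (m ! : ℝ) := by exact_mod_cast Nat.one_le_iff_ne_zero.2 (Nat.factorial_ne_zero m)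
  have hfacpos : (0 : ℝ) < (m ! : ℝ) := by linarith
  have TJ : Filter.Tendsto J (nhdsWithin a (Set.Ioc a b)) (nhds 0) := by
    have hslope : Filter.Tendsto (fun y => (Q y - Q a) / (y - a)) (nhdsWithin a (s \ {a})) (nhds 0) := by
      have hts := hasDerivWithinAt_iff_tendsto_slope.1 hder_a
      have hse : (fun y => (Q y - Q a) / (y - a)) = slope Q a := by
        funext y; rw [slope_def_field]
      rw [hse]
      exact hts
    rw [Metric.tendsto_nhdsWithin_nhds] at hslope ⊢
    intro ε hε
    obtain ⟨δ, hδ, hδP⟩ := hslope (ε / 3) (by positivity)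
    refine ⟨δ, hδ, ?_⟩
    intro x hx hxd
    obtain ⟨c, hc, hrep⟩ := key x hx
    have hxs : x ∈ s := ⟨hx.1.le, hx.2⟩
    have hcs : c ∈ s := ⟨hc.1, le_trans hc.2 hx.2⟩
    have hxa : 0 < x - a := sub_pos.2 hx.1
    have hdxa : |x - a| < δ := by rwa [Real.dist_eq] at hxd
    have b1 : |Q x - Q a| ≤ ε / 3 * (x - a) := by
      have hx' : x ∈ s \ {a} := ⟨hxs, by simp [ne_of_gt hx.1]⟩
      have hb := hδP hx' (by rwa [Real.dist_eq])
      rw [Real.dist_eq, sub_zero, abs_div, abs_of_pos hxa] at hb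
      exact le_of_lt ((div_lt_iff₀ hxa).1 hb)
    have b2 : |Q c - Q a| ≤ ε / 3 * (x - a) := by
      rcases eq_or_lt_of_le hc.1 with hca | hca
      · rw [← hca]
        simp
        positivity
      · have hc' : c ∈ s \ {a} := ⟨hcs, by simp [ne_of_gt hca]⟩
        have hcxa : 0 < c - a := sub_pos.2 hca
        have hb := hδP hc' (by rw [Real.dist_eq, abs_of_pos hcxa]; calc c - a ≤ x - a := by linarith [hc.2]
                                                                        _ ≤ |x - a| := le_abs_self _
                                                                        _ < δ := hdxa)
        rw [Real.dist_eq, sub_zero, abs_div, abs_of_pos hcxa] at hb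
        have := le_of_lt ((div_lt_iff₀ hcxa).1 hb)
        calc |Q c - Q a| ≤ ε / 3 * (c - a) := this
          _ ≤ ε / 3 * (x - a) := by have := hc.2; nlinarith
    have hQxc : |Q x - Q c| ≤ 2 * (ε / 3) * (x - a) := by
      have habs : |Q x - Q c| ≤ |Q x - Q a| + |Q c - Q a| := by
        have h3 := abs_sub (Q x - Q a) (Q c - Q a)
        simpa using h3
      linarith
    rw [Real.dist_eq, sub_zero]
    have hJeq : J x = (Q x - Q c) * ((a - x) ^ m / (m ! : ℝ) / (x - a) ^ (m + 1)) := by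
      simp only [hJdef]
      rw [hrep]
      ring
    rw [hJeq, abs_mul]
    have habs2 : |(a - x) ^ m / (m ! : ℝ) / (x - a) ^ (m + 1)| = 1 / (m ! : ℝ) * (1 / (x - a)) := by
      rw [abs_div, abs_div, abs_pow, abs_pow, abs_sub_comm a x, abs_of_pos hxa,
        abs_of_pos hfacpos, pow_succ]
      have hxane : x - a ≠ 0 := ne_of_gt hxa
      have hpne : (x - a) ^ m ≠ 0 := pow_ne_zero _ hxane
      field_simp
    rw [habs2]
    calc |Q x - Q c| * (1 / (m ! : ℝ) * (1 / (x - a)))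
        ≤ 2 * (ε / 3) * (x - a) * (1 / (m ! : ℝ) * (1 / (x - a))) :=
          mul_le_mul_of_nonneg_right hQxc (by positivity)
      _ = 2 * (ε / 3) / (m ! : ℝ) * ((x - a) * (1 / (x - a))) := by ring
      _ = 2 * (ε / 3) / (m ! : ℝ) := by rw [mul_one_div, div_self (ne_of_gt hxa), mul_one]
      _ ≤ 2 * (ε / 3) := div_le_self (by positivity) hm1
      _ < ε := by linarith
  have hJcont : ContinuousOn J s := by
    intro y hy
    rcases eq_or_lt_of_le hy.1 with hya | hya
    · -- y = a
      rw [← hya]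
      show Filter.Tendsto J (nhdsWithin a s) (nhds (J a))
      rw [hJa]
      have hins : nhdsWithin a s = nhdsWithin a (insert a (Set.Ioc a b)) := by
        rw [hsdef, Set.Ioc_insert_left hab.le]
      rw [hins, nhdsWithin_insert, Filter.tendsto_sup]
      constructor
      · simpa [hJa] using tendsto_pure_nhds J a
      · exact TJ
    · have hsub : ContinuousWithinAt (fun x => (x - a) ^ (m + 1)) s y :=
        ((continuous_id.sub continuous_const).pow (m + 1)).continuousWithinAt
      have hnum : ContinuousWithinAt (fun x => G x - G a) s y :=
        (hGc y hy).sub continuousWithinAt_const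
      have hne : ((y - a) ^ (m + 1) : ℝ) ≠ 0 := pow_ne_zero _ (ne_of_gt (sub_pos.2 hya))
      exact hnum.div hsub hne
  have hJ' : ∀ x ∈ Set.Ioc a b, HasDerivWithinAt J
      ((((m ! : ℝ)⁻¹ * (a - x) ^ m * iteratedDerivWithin (m + 1) h s x) * (x - a) ^ (m + 1)
          - (G x - G a) * ((m + 1) * (x - a) ^ m)) / ((x - a) ^ (m + 1)) ^ 2) s x := by
    intro x hx
    have hxs : x ∈ s := ⟨hx.1.le, hx.2⟩
    have h1 : HasDerivWithinAt (fun y => G y - G a)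
        ((m ! : ℝ)⁻¹ * (a - x) ^ m * iteratedDerivWithin (m + 1) h s x) s x := by
      have := (hG' x hxs).sub_const (G a)
      rw [smul_eq_mul] at this
      exact this
    have h2 : HasDerivWithinAt (fun y => (y - a) ^ (m + 1)) (((m : ℝ) + 1) * (x - a) ^ m) s x := by
      have h2' := (((hasDerivAt_id x).sub_const a).pow (m + 1)).hasDerivWithinAt (s := s)
      simp only [id_eq] at h2'
      have heq : ((m + 1 : ℕ) : ℝ) * (x - a) ^ (m + 1 - 1) * 1 = ((m : ℝ) + 1) * (x - a) ^ m := by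
        push_cast
        ring
      rwa [heq] at h2'
    have hne : ((x - a) ^ (m + 1) : ℝ) ≠ 0 := pow_ne_zero _ (ne_of_gt (sub_pos.2 hx.1))
    exact h1.div h2 hne
  -- find an interior zero of J'
  have flett : ∃ η ∈ Set.Ioo a b,
      (((m ! : ℝ)⁻¹ * (a - η) ^ m * iteratedDerivWithin (m + 1) h s η) * (η - a) ^ (m + 1)
          - (G η - G a) * ((m + 1) * (η - a) ^ m)) / ((η - a) ^ (m + 1)) ^ 2 = 0 := by
    have hJderiv : ∀ x ∈ Set.Ioo a b, HasDerivAt J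
        (((((m ! : ℝ))⁻¹ * (a - x) ^ m * iteratedDerivWithin (m + 1) h s x) * (x - a) ^ (m + 1)
          - (G x - G a) * ((m + 1) * (x - a) ^ m)) / ((x - a) ^ (m + 1)) ^ 2) x := fun x hx =>
      (hJ' x ⟨hx.1, hx.2.le⟩).hasDerivAt (Icc_mem_nhds hx.1 hx.2)
    have hbIoc : b ∈ Set.Ioc a b := ⟨hab, le_refl b⟩
    have hbpos : (0 : ℝ) < b - a := sub_pos.2 hab
    have hJbval : G b - G a = J b * (b - a) ^ (m + 1) := by
      simp only [hJdef]
      field_simp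
    have hsdiff : s \ {b} = Set.Ico a b := by rw [hsdef]; exact Set.Icc_sdiff_right
    have hNB : (nhdsWithin b (s \ {b})).NeBot := by
      rw [hsdiff]; exact right_nhdsWithin_Ico_neBot hab
    rcases lt_trichotomy (J b) 0 with hJb | hJb | hJb
    · -- J b < 0 : use min
      have hGba : G b - G a < 0 := by
        rw [hJbval]
        have : (0:ℝ) < (b - a) ^ (m + 1) := pow_pos hbpos _
        nlinarith
      have hJ'b : (0:ℝ) < ((((m ! : ℝ))⁻¹ * (a - b) ^ m * iteratedDerivWithin (m + 1) h s b) * (b - a) ^ (m + 1)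
          - (G b - G a) * ((m + 1) * (b - a) ^ m)) / ((b - a) ^ (m + 1)) ^ 2 := by
        rw [hb0]
        apply _root_.div_pos
        · have h1 : (0:ℝ) < (b - a) ^ m := pow_pos hbpos _
          have h2 : (0:ℝ) < ((m:ℝ) + 1) := by positivity
          have h3 := mul_pos (neg_pos.2 hGba) (mul_pos h2 h1)
          nlinarith [h3]
        · positivity
      have hslb := hasDerivWithinAt_iff_tendsto_slope.1 (hJ' b hbIoc)
      have hev : ∀ᶠ y in nhdsWithin b (s \ {b}), 0 < slope J b y :=
        hslb.eventually_const_lt hJ'b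
      obtain ⟨y, hy, hyslope⟩ := (eventually_mem_nhdsWithin.and hev).exists
      have hyb : y < b := lt_of_le_of_ne hy.1.2 (by simpa using hy.2)
      have hJy : J y < J b := by
        rw [slope_def_field] at hyslope
        rcases div_pos_iff.1 hyslope with ⟨h1, h2⟩ | ⟨h1, h2⟩
        · linarith
        · linarith
      obtain ⟨η, hηs, hmin⟩ := isCompact_Icc.exists_isMinOn (Set.nonempty_Icc.2 hab.le) hJcont
      have hJη : J η ≤ J y := isMinOn_iff.1 hmin y hy.1
      have hJηb : J η < J b := lt_of_le_of_lt hJη hJy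
      have hJηa : J η < 0 := lt_trans hJηb hJb
      have hηIoo : η ∈ Set.Ioo a b := by
        rcases hηs.1.lt_or_eq with h1 | h1
        · rcases hηs.2.lt_or_eq with h2 | h2
          · exact ⟨h1, h2⟩
          · exact absurd (h2 ▸ hJηb) (lt_irrefl _)
        · exact absurd (h1 ▸ hJηa) (by rw [← hJa]; exact lt_irrefl _)
      refine ⟨η, hηIoo, ?_⟩
      exact (hmin.isLocalMin (Icc_mem_nhds hηIoo.1 hηIoo.2)).hasDerivAt_eq_zero (hJderiv η hηIoo)
    · -- J b = 0 : Rolle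
      exact exists_hasDerivAt_eq_zero hab hJcont (by rw [hJa, hJb]) hJderiv
    · -- J b > 0 : use max
      have hGba : 0 < G b - G a := by
        rw [hJbval]
        have : (0:ℝ) < (b - a) ^ (m + 1) := pow_pos hbpos _
        nlinarith
      have hJ'b : ((((m ! : ℝ))⁻¹ * (a - b) ^ m * iteratedDerivWithin (m + 1) h s b) * (b - a) ^ (m + 1)
          - (G b - G a) * ((m + 1) * (b - a) ^ m)) / ((b - a) ^ (m + 1)) ^ 2 < 0 := by
        rw [hb0]
        apply div_neg_of_neg_of_pos
        · have h1 : (0:ℝ) < (b - a) ^ m := pow_pos hbpos _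
          have h2 : (0:ℝ) < ((m:ℝ) + 1) := by positivity
          have h3 := mul_pos hGba (mul_pos h2 h1)
          nlinarith [h3]
        · positivity
      have hslb := hasDerivWithinAt_iff_tendsto_slope.1 (hJ' b hbIoc)
      have hev : ∀ᶠ y in nhdsWithin b (s \ {b}), slope J b y < 0 :=
        hslb.eventually_lt_const hJ'b
      obtain ⟨y, hy, hyslope⟩ := (eventually_mem_nhdsWithin.and hev).exists
      have hyb : y < b := lt_of_le_of_ne hy.1.2 (by simpa using hy.2)
      have hJy : J b < J y := by
        rw [slope_def_field] at hyslope
        rcases div_neg_iff.1 hyslope with ⟨h1, h2⟩ | ⟨h1, h2⟩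
        · linarith
        · linarith
      obtain ⟨η, hηs, hmax⟩ := isCompact_Icc.exists_isMaxOn (Set.nonempty_Icc.2 hab.le) hJcont
      have hJη : J y ≤ J η := isMaxOn_iff.1 hmax y hy.1
      have hJηb : J b < J η := lt_of_lt_of_le hJy hJη
      have hJηa : 0 < J η := lt_trans hJb hJηb
      have hηIoo : η ∈ Set.Ioo a b := by
        rcases hηs.1.lt_or_eq with h1 | h1
        · rcases hηs.2.lt_or_eq with h2 | h2
          · exact ⟨h1, h2⟩
          · exact absurd (h2 ▸ hJηb) (lt_irrefl _)
        · exact absurd (h1 ▸ hJηa) (by rw [← hJa]; exact lt_irrefl _)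
      refine ⟨η, hηIoo, ?_⟩
      exact (hmax.isLocalMax (Icc_mem_nhds hηIoo.1 hηIoo.2)).hasDerivAt_eq_zero (hJderiv η hηIoo)
  obtain ⟨η, hη, hη0⟩ := flett
  refine ⟨η, hη, ?_⟩
  have hηa : η - a ≠ 0 := ne_of_gt (sub_pos.2 hη.1)
  have hden : (((η - a) ^ (m + 1)) ^ 2 : ℝ) ≠ 0 := pow_ne_zero _ (pow_ne_zero _ hηa)
  have hnum : ((m ! : ℝ)⁻¹ * (a - η) ^ m * iteratedDerivWithin (m + 1) h s η) * (η - a) ^ (m + 1)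
      - (G η - G a) * (((m : ℝ) + 1) * (η - a) ^ m) = 0 :=
    (div_eq_zero_iff.1 hη0).resolve_right hden
  have hpm : ((η - a) ^ m : ℝ) ≠ 0 := pow_ne_zero _ hηa
  have hcancel : ((m ! : ℝ)⁻¹ * (a - η) ^ m * iteratedDerivWithin (m + 1) h s η) * (η - a)
      = (G η - G a) * ((m : ℝ) + 1) := by
    apply mul_right_cancel₀ hpm
    linear_combination hnum
  rw [hGa] at hcancel
  have hT : taylorWithinEval h (m + 1) s η a
      = G η + (((m : ℝ) + 1) * (m ! : ℝ))⁻¹ * (a - η) ^ (m + 1) * iteratedDerivWithin (m + 1) h s η := by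
    have hts := taylorWithinEval_succ h m s η a
    rw [smul_eq_mul] at hts
    exact hts
  rw [hT]
  have hm1ne : ((m : ℝ) + 1) ≠ 0 := by positivity
  have hfacne : (m ! : ℝ) ≠ 0 := ne_of_gt hfacpos
  field_simp at hcancel ⊢
  linear_combination hcancel
/-- **Cauchy-type Pawlikowska theorem.** Let `f, g` be `n`-times differentiable at every
point of `[a,b]` (one-sidedly at the endpoints), where the iterated derivatives are taken
within `[a,b]`, with `g⁽ⁿ⁾(a) ≠ g⁽ⁿ⁾(b)`. Then there exists `η ∈ (a,b)` with
`f(a) - T_n(f,η)(a) = ((f⁽ⁿ⁾(b) - f⁽ⁿ⁾(a))/(g⁽ⁿ⁾(b) - g⁽ⁿ⁾(a)))·(g(a) - T_n(g,η)(a))`,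
where `T_n(h,η)(a) = ∑_{i=0}^{n} (h⁽ⁱ⁾(η)/i!)·(a-η)^i`. -/
theorem cauchy_pawlikowska_theorem (f g : ℝ → ℝ) (a b : ℝ) (n : ℕ) (hn : 1 ≤ n)
    (hab : a < b)
    (hf : ∀ i < n, ∀ x ∈ Set.Icc a b,
      DifferentiableWithinAt ℝ (iteratedDerivWithin i f (Set.Icc a b)) (Set.Icc a b) x)
    (hg : ∀ i < n, ∀ x ∈ Set.Icc a b,
      DifferentiableWithinAt ℝ (iteratedDerivWithin i g (Set.Icc a b)) (Set.Icc a b) x)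
    (hgab : iteratedDerivWithin n g (Set.Icc a b) a ≠ iteratedDerivWithin n g (Set.Icc a b) b) :
    ∃ η ∈ Set.Ioo a b,
      f a - (∑ i ∈ Finset.range (n + 1),
          iteratedDerivWithin i f (Set.Icc a b) η / (Nat.factorial i) * (a - η) ^ i) =
        ((iteratedDerivWithin n f (Set.Icc a b) b - iteratedDerivWithin n f (Set.Icc a b) a) /
          (iteratedDerivWithin n g (Set.Icc a b) b - iteratedDerivWithin n g (Set.Icc a b) a)) *
        (g a - ∑ i ∈ Finset.range (n + 1),
          iteratedDerivWithin i g (Set.Icc a b) η / (Nat.factorial i) * (a - η) ^ i) := by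
  obtain ⟨m, rfl⟩ : ∃ m, n = m + 1 := ⟨n - 1, (Nat.succ_pred_eq_of_pos hn).symm⟩
  set s := Set.Icc a b with hsdef
  have hs : UniqueDiffOn ℝ s := uniqueDiffOn_Icc hab
  have has : a ∈ s := Set.left_mem_Icc.2 hab.le
  have hbs : b ∈ s := Set.right_mem_Icc.2 hab.le
  set Df := iteratedDerivWithin (m + 1) f s b - iteratedDerivWithin (m + 1) f s a with hDfdef
  set Dg := iteratedDerivWithin (m + 1) g s b - iteratedDerivWithin (m + 1) g s a with hDgdef
  have hDg : Dg ≠ 0 := sub_ne_zero.2 (Ne.symm hgab)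
  set C := Dg * iteratedDerivWithin (m + 1) f s a - Df * iteratedDerivWithin (m + 1) g s a
    with hCdef
  have hfacne : (((m + 1)! : ℕ) : ℝ) ≠ 0 := by exact_mod_cast (m + 1).factorial_ne_zero
  set K := C / (((m + 1)! : ℕ) : ℝ) with hKdef
  set ψ : ℝ → ℝ := fun x => Dg * f x - Df * g x - K * x ^ (m + 1) with hψdef
  have hiter : ∀ i ≤ m + 1, ∀ x ∈ s, iteratedDerivWithin i ψ s x
      = Dg * iteratedDerivWithin i f s x - Df * iteratedDerivWithin i g s x
        - K * (((m + 1).descFactorial i : ℕ) : ℝ) * x ^ (m + 1 - i) := by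
    intro i
    induction i with
    | zero =>
      intro _ x hx
      simp [iteratedDerivWithin_zero, hψdef]
    | succ i ih =>
      intro hi x hx
      have hilt : i < m + 1 := hi
      have hi' : i ≤ m + 1 := le_of_lt hilt
      rw [iteratedDerivWithin_succ]
      have hEq : Set.EqOn (iteratedDerivWithin i ψ s)
          (fun y => Dg * iteratedDerivWithin i f s y - Df * iteratedDerivWithin i g s y
            - K * (((m + 1).descFactorial i : ℕ) : ℝ) * y ^ (m + 1 - i)) s :=
        fun y hy => ih hi' y hy
      rw [derivWithin_congr hEq (hEq hx)]
      have hdf : HasDerivWithinAt (iteratedDerivWithin i f s)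
          (iteratedDerivWithin (i + 1) f s x) s x := by
        have hh := (hf i hilt x hx).hasDerivWithinAt
        rwa [← iteratedDerivWithin_succ] at hh
      have hdg : HasDerivWithinAt (iteratedDerivWithin i g s)
          (iteratedDerivWithin (i + 1) g s x) s x := by
        have hh := (hg i hilt x hx).hasDerivWithinAt
        rwa [← iteratedDerivWithin_succ] at hh
      have hdp : HasDerivWithinAt (fun y : ℝ => y ^ (m + 1 - i))
          (((m + 1 - i : ℕ) : ℝ) * x ^ (m + 1 - i - 1)) s x :=
        (hasDerivAt_pow (m + 1 - i) x).hasDerivWithinAt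
      have hdall : HasDerivWithinAt
          (fun y => Dg * iteratedDerivWithin i f s y - Df * iteratedDerivWithin i g s y
            - K * (((m + 1).descFactorial i : ℕ) : ℝ) * y ^ (m + 1 - i))
          (Dg * iteratedDerivWithin (i + 1) f s x - Df * iteratedDerivWithin (i + 1) g s x
            - K * (((m + 1).descFactorial i : ℕ) : ℝ) * (((m + 1 - i : ℕ) : ℝ) * x ^ (m + 1 - i - 1))) s x :=
        ((hdf.const_mul Dg).sub (hdg.const_mul Df)).sub
          (hdp.const_mul (K * (((m + 1).descFactorial i : ℕ) : ℝ)))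
      rw [hdall.derivWithin (hs x hx)]
      have hdesc : (((m + 1).descFactorial (i + 1) : ℕ) : ℝ)
          = ((m + 1 - i : ℕ) : ℝ) * (((m + 1).descFactorial i : ℕ) : ℝ) := by
        rw [Nat.descFactorial_succ]
        push_cast
        ring
      have hexp : m + 1 - i - 1 = m + 1 - (i + 1) := by omega
      rw [hdesc, hexp]
      ring
  have hdψ : ∀ i < m + 1, ∀ x ∈ s, DifferentiableWithinAt ℝ (iteratedDerivWithin i ψ s) s x := by
    intro i hi x hx
    have hEq : Set.EqOn (iteratedDerivWithin i ψ s)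
        (fun y => Dg * iteratedDerivWithin i f s y - Df * iteratedDerivWithin i g s y
          - K * (((m + 1).descFactorial i : ℕ) : ℝ) * y ^ (m + 1 - i)) s :=
      fun y hy => hiter i (le_of_lt hi) y hy
    have hR : DifferentiableWithinAt ℝ
        (fun y => Dg * iteratedDerivWithin i f s y - Df * iteratedDerivWithin i g s y
          - K * (((m + 1).descFactorial i : ℕ) : ℝ) * y ^ (m + 1 - i)) s x :=
      (((hf i hi x hx).const_mul Dg).sub ((hg i hi x hx).const_mul Df)).sub
        (((differentiable_pow (m + 1 - i)).differentiableAt.differentiableWithinAt).const_mul _)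
    exact hR.congr (fun y hy => hEq hy) (hEq hx)
  have hψa : iteratedDerivWithin (m + 1) ψ s a = 0 := by
    rw [hiter (m + 1) le_rfl a has, Nat.sub_self, Nat.descFactorial_self, pow_zero]
    rw [hKdef, hCdef]
    field_simp
    ring
  have hψb : iteratedDerivWithin (m + 1) ψ s b = 0 := by
    rw [hiter (m + 1) le_rfl b hbs, Nat.sub_self, Nat.descFactorial_self, pow_zero]
    rw [hKdef, hCdef, hDfdef, hDgdef]
    field_simp
    ring
  obtain ⟨η, hη, hηeq⟩ := pawlikowska_aux ψ a b m hab hdψ hψa hψb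
  rw [taylor_within_apply] at hηeq
  refine ⟨η, hη, ?_⟩
  have hηs : η ∈ s := Set.Ioo_subset_Icc_self hη
  have hsum : ∀ i ∈ Finset.range (m + 1 + 1),
      ((i ! : ℝ)⁻¹ * (a - η) ^ i) • iteratedDerivWithin i ψ s η
      = Dg * ((i ! : ℝ)⁻¹ * (a - η) ^ i * iteratedDerivWithin i f s η)
        - Df * ((i ! : ℝ)⁻¹ * (a - η) ^ i * iteratedDerivWithin i g s η)
        - K * ((((m + 1).choose i : ℕ) : ℝ) * ((a - η) ^ i * η ^ (m + 1 - i))) := by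
    intro i hi
    have hile : i ≤ m + 1 := by
      have := Finset.mem_range.1 hi
      omega
    rw [smul_eq_mul, hiter i hile η hηs]
    have hdc : (((m + 1).descFactorial i : ℕ) : ℝ)
        = (i ! : ℝ) * (((m + 1).choose i : ℕ) : ℝ) := by
      exact_mod_cast congrArg (Nat.cast : ℕ → ℝ) (Nat.descFactorial_eq_factorial_mul_choose (m + 1) i)
    rw [hdc]
    have hfi : (i ! : ℝ) ≠ 0 := by exact_mod_cast i.factorial_ne_zero
    field_simp
  have hbinom : ∑ i ∈ Finset.range (m + 1 + 1),
      ((((m + 1).choose i : ℕ) : ℝ) * ((a - η) ^ i * η ^ (m + 1 - i))) = a ^ (m + 1) := by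
    have hap := add_pow (a - η) η (m + 1)
    rw [sub_add_cancel] at hap
    rw [hap]
    refine Finset.sum_congr rfl fun i _ => by ring
  have hexp2 : ∑ i ∈ Finset.range (m + 1 + 1),
      ((i ! : ℝ)⁻¹ * (a - η) ^ i) • iteratedDerivWithin i ψ s η
      = Dg * (∑ i ∈ Finset.range (m + 1 + 1), (i ! : ℝ)⁻¹ * (a - η) ^ i * iteratedDerivWithin i f s η)
        - Df * (∑ i ∈ Finset.range (m + 1 + 1), (i ! : ℝ)⁻¹ * (a - η) ^ i * iteratedDerivWithin i g s η)
        - K * a ^ (m + 1) := by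
    rw [Finset.sum_congr rfl hsum, Finset.sum_sub_distrib, Finset.sum_sub_distrib,
      ← Finset.mul_sum, ← Finset.mul_sum, ← Finset.mul_sum, hbinom]
  rw [hexp2] at hηeq
  have hψaval : ψ a = Dg * f a - Df * g a - K * a ^ (m + 1) := rfl
  rw [hψaval] at hηeq
  have hkey : Dg * (f a - ∑ i ∈ Finset.range (m + 1 + 1),
        (i ! : ℝ)⁻¹ * (a - η) ^ i * iteratedDerivWithin i f s η)
      = Df * (g a - ∑ i ∈ Finset.range (m + 1 + 1),
        (i ! : ℝ)⁻¹ * (a - η) ^ i * iteratedDerivWithin i g s η) := by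
    linear_combination hηeq
  have hTf : ∑ i ∈ Finset.range (m + 1 + 1),
      iteratedDerivWithin i f s η / (Nat.factorial i : ℝ) * (a - η) ^ i
      = ∑ i ∈ Finset.range (m + 1 + 1), (i ! : ℝ)⁻¹ * (a - η) ^ i * iteratedDerivWithin i f s η :=
    Finset.sum_congr rfl fun i _ => by ring
  have hTg : ∑ i ∈ Finset.range (m + 1 + 1),
      iteratedDerivWithin i g s η / (Nat.factorial i : ℝ) * (a - η) ^ i
      = ∑ i ∈ Finset.range (m + 1 + 1), (i ! : ℝ)⁻¹ * (a - η) ^ i * iteratedDerivWithin i g s η :=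
    Finset.sum_congr rfl fun i _ => by ring
  rw [hTf, hTg, div_mul_eq_mul_div, eq_div_iff hDg]
  linear_combination hkey
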